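/- One-step incremental contraction (intermediate claim in the proof of Theorem 2): fix λ̌ ≥ 1 and set σ̌_z = σ(‖[W_z λ̌U_z b_z]‖_∞), σ̌_f = σ(‖[W_f λ̌U_f b_f]‖_∞), φ̌_r = tanh(‖[W_r λ̌U_r b_r]‖_∞), and α̌_Δu = (1/4)(λ̌ + φ̌_r)‖W_z‖_∞ + σ̌_z(‖W_r‖_∞ + (1/4) λ̌ ‖U_r‖_∞ ‖W_f‖_∞). Suppose ‖U_r‖_∞ ( (1/4) λ̌ ‖U_f‖_∞ + σ̌_f ) < 1 − (1/4) ((λ̌ + φ̌_r)/(1 − σ̌_z)) ‖U_z‖_∞. Then there exists δ_Δ ∈ (0,1) such that for all u_a, u_b ∈ ℝ^{n_u} with ‖u_a‖_∞ ≤ 1 and ‖u_b‖_∞ ≤ 1 and all x_a, x_b ∈ ℝ^{n_x} with ‖x_a‖_∞ ≤ λ̌ and ‖x_b‖_∞ ≤ λ̌, the GRU successor states satisfy ‖x_a⁺ − x_b⁺‖_∞ ≤ (1 − δ_Δ) ‖x_a − x_b‖_∞ + α̌_Δu ‖u_a − u_b‖_∞. -/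

import Mathlib

open Real Filter

/-- The _root_.sigmoid activation function. -/
noncomputable def sigmoid (s : ℝ) : ℝ := 1 / (1 + Real.exp (-s))

/-- Induced infinity norm of a matrix (maximum absolute row sum). -/
noncomputable def matNorm {n m : ℕ} (A : Matrix (Fin n) (Fin m) ℝ) : ℝ :=
  ⨆ i, ∑ j, |A i j|

/-- Infinity norm of the horizontal concatenation `[A B c]`
(maximum absolute row sum of the concatenated matrix). -/
noncomputable def catNorm {n m p : ℕ} (A : Matrix (Fin n) (Fin m) ℝ)
    (B : Matrix (Fin n) (Fin p) ℝ) (c : Fin n → ℝ) : ℝ :=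
  ⨆ i, (∑ j, |A i j| + ∑ j, |B i j| + |c i|)

/-- One step of the single-layer GRU:
`x⁺ = z ∘ x + (1 - z) ∘ tanh(W_r u + U_r (f ∘ x) + b_r)`,
`z = σ(W_z u + U_z x + b_z)`, `f = σ(W_f u + U_f x + b_f)`. -/
noncomputable def gruStep {nu nx : ℕ}
    (Wz Wf Wr : Matrix (Fin nx) (Fin nu) ℝ)
    (Uz Uf Ur : Matrix (Fin nx) (Fin nx) ℝ)
    (bz bf br : Fin nx → ℝ)
    (u : Fin nu → ℝ) (x : Fin nx → ℝ) : Fin nx → ℝ :=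
  let z : Fin nx → ℝ := fun i => _root_.sigmoid ((Wz.mulVec u + Uz.mulVec x + bz) i)
  let f : Fin nx → ℝ := fun i => _root_.sigmoid ((Wf.mulVec u + Uf.mulVec x + bf) i)
  let r : Fin nx → ℝ := fun i => Real.tanh ((Wr.mulVec u + Ur.mulVec (f * x) + br) i)
  fun j => z j * x j + (1 - z j) * r j


section Aux

lemma sigmoid_pos (s : ℝ) : 0 < _root_.sigmoid s := by unfold _root_.sigmoid; positivity

lemma sigmoid_lt_one (s : ℝ) : _root_.sigmoid s < 1 := by
  unfold _root_.sigmoid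
  rw [div_lt_one (by positivity)]
  linarith [Real.exp_pos (-s)]

lemma sigmoid_neg (s : ℝ) : _root_.sigmoid (-s) = 1 - _root_.sigmoid s := by
  unfold _root_.sigmoid
  rw [neg_neg, Real.exp_neg]
  have h := (Real.exp_pos s).ne'
  field_simp
  ring

lemma sigmoid_mono : Monotone _root_.sigmoid := by
  intro a b hab
  unfold _root_.sigmoid
  exact one_div_le_one_div_of_le (by positivity)
    (by linarith [Real.exp_le_exp.2 (neg_le_neg hab)])

lemma hasDerivAt_sigmoid (s : ℝ) :
    HasDerivAt _root_.sigmoid (Real.exp (-s) / (1 + Real.exp (-s))^2) s := by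
  have h1 : HasDerivAt (fun t : ℝ => -t) (-1) s := (hasDerivAt_id s).neg
  have h2 : HasDerivAt (fun t : ℝ => Real.exp (-t)) (Real.exp (-s) * (-1)) s :=
    (Real.hasDerivAt_exp (-s)).comp s h1
  have h3 : HasDerivAt (fun t : ℝ => 1 + Real.exp (-t)) (Real.exp (-s) * (-1)) s :=
    h2.const_add 1
  have h4 := h3.inv (by positivity)
  have he : _root_.sigmoid = fun t => (1 + Real.exp (-t))⁻¹ := by
    funext t; unfold _root_.sigmoid; rw [one_div]
  rw [he]
  exact h4.congr_deriv (by ring)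

lemma sigmoid_lipschitz (a b : ℝ) : |_root_.sigmoid a - _root_.sigmoid b| ≤ (1/4) * |a - b| := by
  wlog hab : b ≤ a generalizing a b
  · rw [abs_sub_comm, abs_sub_comm a b]; exact this b a (by linarith)
  rcases eq_or_lt_of_le hab with h | h
  · simp [h]
  obtain ⟨c, _, hc⟩ := exists_hasDerivAt_eq_slope _root_.sigmoid
    (fun t => Real.exp (-t) / (1 + Real.exp (-t))^2) h
    (fun t _ => (_root_.hasDerivAt_sigmoid t).continuousAt.continuousWithinAt)
    (fun t _ => _root_.hasDerivAt_sigmoid t)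
  have hd : Real.exp (-c) / (1 + Real.exp (-c))^2 ≤ 1/4 := by
    rw [div_le_iff₀ (by positivity)]
    nlinarith [sq_nonneg (1 - Real.exp (-c)), Real.exp_pos (-c)]
  have hd0 : 0 ≤ Real.exp (-c) / (1 + Real.exp (-c))^2 := by positivity
  rw [eq_div_iff (by linarith : a - b ≠ 0)] at hc
  rw [← hc, abs_mul, abs_of_nonneg hd0]
  have hab' : (0:ℝ) ≤ |a - b| := abs_nonneg _
  nlinarith

lemma tanh_eq_sigmoid (x : ℝ) : Real.tanh x = 2 * _root_.sigmoid (2*x) - 1 := by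
  rw [Real.tanh_eq_sinh_div_cosh, Real.sinh_eq, Real.cosh_eq]
  unfold _root_.sigmoid
  have h1 : Real.exp (-(2*x)) = Real.exp (-x) * Real.exp (-x) := by
    rw [← Real.exp_add]; ring_nf
  have h2 : Real.exp x * Real.exp (-x) = 1 := by
    rw [← Real.exp_add]; simp
  have e1 := (Real.exp_pos x).ne'
  have e2 := (Real.exp_pos (-x)).ne'
  have e3 : Real.exp x + Real.exp (-x) ≠ 0 := by positivity
  rw [h1]
  field_simp
  nlinarith [Real.exp_pos x, Real.exp_pos (-x)]

lemma tanh_lipschitz (a b : ℝ) : |Real.tanh a - Real.tanh b| ≤ |a - b| := by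
  rw [_root_.tanh_eq_sigmoid, _root_.tanh_eq_sigmoid]
  have h := _root_.sigmoid_lipschitz (2*a) (2*b)
  have h2 : |2*a - 2*b| = 2 * |a - b| := by
    rw [show (2:ℝ)*a - 2*b = 2*(a-b) by ring, abs_mul, abs_two]
  calc |2 * _root_.sigmoid (2*a) - 1 - (2 * _root_.sigmoid (2*b) - 1)|
      = 2 * |_root_.sigmoid (2*a) - _root_.sigmoid (2*b)| := by
        rw [show 2 * _root_.sigmoid (2*a) - 1 - (2 * _root_.sigmoid (2*b) - 1)
            = 2*(_root_.sigmoid (2*a) - _root_.sigmoid (2*b)) by ring, abs_mul, abs_two]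
    _ ≤ |a - b| := by rw [h2] at h; linarith

lemma tanh_mono : Monotone Real.tanh := by
  intro a b hab
  rw [_root_.tanh_eq_sigmoid, _root_.tanh_eq_sigmoid]
  have := _root_.sigmoid_mono (by linarith : 2*a ≤ 2*b)
  linarith

lemma abs_tanh_le {s M : ℝ} (h : |s| ≤ M) : |Real.tanh s| ≤ Real.tanh M := by
  rw [abs_le] at h
  rw [abs_le]
  constructor
  · have := _root_.tanh_mono h.1
    have hneg : Real.tanh (-M) = -Real.tanh M := by
      rw [_root_.tanh_eq_sigmoid, _root_.tanh_eq_sigmoid]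
      have : (2:ℝ) * -M = -(2*M) := by ring
      rw [this, _root_.sigmoid_neg]; ring
    linarith [hneg ▸ this]
  · exact _root_.tanh_mono h.2

lemma tanh_nonneg' {M : ℝ} (h : 0 ≤ M) : 0 ≤ Real.tanh M := by
  have := _root_.tanh_mono h
  simpa [Real.tanh_zero] using this

lemma sigmoid_bounds {s M : ℝ} (h : |s| ≤ M) :
    1 - _root_.sigmoid M ≤ _root_.sigmoid s ∧ _root_.sigmoid s ≤ _root_.sigmoid M := by
  rw [abs_le] at h
  exact ⟨by rw [← _root_.sigmoid_neg]; exact _root_.sigmoid_mono h.1, _root_.sigmoid_mono h.2⟩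

lemma matNorm_nonneg {n m : ℕ} (A : Matrix (Fin n) (Fin m) ℝ) : 0 ≤ matNorm A :=
  Real.iSup_nonneg fun i => Finset.sum_nonneg fun j _ => abs_nonneg _

lemma catNorm_nonneg {n m p : ℕ} (A : Matrix (Fin n) (Fin m) ℝ)
    (B : Matrix (Fin n) (Fin p) ℝ) (c : Fin n → ℝ) : 0 ≤ catNorm A B c :=
  Real.iSup_nonneg fun i => by positivity

lemma row_le_matNorm {n m : ℕ} (A : Matrix (Fin n) (Fin m) ℝ) (i : Fin n) :
    ∑ j, |A i j| ≤ matNorm A := by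
  have := le_ciSup (f := fun i => ∑ j, |A i j|) (Set.Finite.bddAbove (Set.finite_range _)) i
  simpa [matNorm] using this

lemma row_le_catNorm {n m p : ℕ} (A : Matrix (Fin n) (Fin m) ℝ)
    (B : Matrix (Fin n) (Fin p) ℝ) (c : Fin n → ℝ) (i : Fin n) :
    ∑ j, |A i j| + ∑ j, |B i j| + |c i| ≤ catNorm A B c := by
  have := le_ciSup (f := fun i => ∑ j, |A i j| + ∑ j, |B i j| + |c i|)
    (Set.Finite.bddAbove (Set.finite_range _)) i
  simpa [catNorm] using this

lemma abs_mulVec_le_row {n m : ℕ} (A : Matrix (Fin n) (Fin m) ℝ) (v : Fin m → ℝ) (i : Fin n) :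
    |A.mulVec v i| ≤ (∑ j, |A i j|) * ‖v‖ := by
  rw [Matrix.mulVec, dotProduct]
  calc |∑ j, A i j * v j| ≤ ∑ j, |A i j * v j| := Finset.abs_sum_le_sum_abs _ _
    _ ≤ ∑ j, |A i j| * ‖v‖ := Finset.sum_le_sum fun j _ => by
        rw [abs_mul]
        exact mul_le_mul_of_nonneg_left (norm_le_pi_norm v j) (abs_nonneg _)
    _ = (∑ j, |A i j|) * ‖v‖ := by rw [Finset.sum_mul]

lemma abs_mulVec_le {n m : ℕ} (A : Matrix (Fin n) (Fin m) ℝ) (v : Fin m → ℝ) (i : Fin n) :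
    |A.mulVec v i| ≤ matNorm A * ‖v‖ :=
  (abs_mulVec_le_row A v i).trans
    (mul_le_mul_of_nonneg_right (row_le_matNorm A i) (norm_nonneg _))

lemma arg_bound {nu nx : ℕ} (W : Matrix (Fin nx) (Fin nu) ℝ) (U : Matrix (Fin nx) (Fin nx) ℝ)
    (b : Fin nx → ℝ) {lam : ℝ} (hlam : 0 ≤ lam) {u : Fin nu → ℝ} {x : Fin nx → ℝ}
    (hu : ‖u‖ ≤ 1) (hx : ‖x‖ ≤ lam) (i : Fin nx) :
    |(W.mulVec u + U.mulVec x + b) i| ≤ catNorm W (lam • U) b := by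
  have h1 : |W.mulVec u i| ≤ ∑ j, |W i j| := by
    have := abs_mulVec_le_row W u i
    nlinarith [Finset.sum_nonneg (fun j (_ : j ∈ Finset.univ) => abs_nonneg (W i j)), norm_nonneg u]
  have h2 : |U.mulVec x i| ≤ ∑ j, |(lam • U) i j| := by
    have h := abs_mulVec_le_row U x i
    have : (∑ j, |U i j|) * ‖x‖ ≤ ∑ j, |(lam • U) i j| := by
      calc (∑ j, |U i j|) * ‖x‖ ≤ (∑ j, |U i j|) * lam :=
            mul_le_mul_of_nonneg_left hx (Finset.sum_nonneg fun j _ => abs_nonneg _)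
        _ = ∑ j, |(lam • U) i j| := by
            rw [Finset.sum_mul]
            congr 1; funext j
            simp [Matrix.smul_apply, abs_mul, abs_of_nonneg hlam]; ring
    linarith
  have h3 := row_le_catNorm W (lam • U) b i
  calc |(W.mulVec u + U.mulVec x + b) i| = |W.mulVec u i + U.mulVec x i + b i| := rfl
    _ ≤ |W.mulVec u i| + |U.mulVec x i| + |b i| := by
        exact (abs_add_le _ _).trans (add_le_add_left (abs_add_le _ _) _)
    _ ≤ catNorm W (lam • U) b := by linarith [le_abs_self (b i)]

end Aux

set_option maxHeartbeats 2000000 in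
/-- **One-step incremental contraction (intermediate claim in the proof of Theorem 2).**
With `σ̌_z = σ(‖[W_z λ̌U_z b_z]‖_∞)`, `σ̌_f = σ(‖[W_f λ̌U_f b_f]‖_∞)`,
`φ̌_r = tanh(‖[W_r λ̌U_r b_r]‖_∞)` and
`α̌_Δu = (1/4)(λ̌ + φ̌_r)‖W_z‖_∞ + σ̌_z(‖W_r‖_∞ + (1/4) λ̌ ‖U_r‖_∞ ‖W_f‖_∞)`, if
`‖U_r‖_∞ ((1/4) λ̌ ‖U_f‖_∞ + σ̌_f) < 1 - (1/4) ((λ̌ + φ̌_r)/(1 - σ̌_z)) ‖U_z‖_∞`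
then there exists `δ_Δ ∈ (0,1)` such that for all unity-bounded inputs and states
bounded by `λ̌`, the successor states satisfy
`‖x_a⁺ - x_b⁺‖_∞ ≤ (1 - δ_Δ) ‖x_a - x_b‖_∞ + α̌_Δu ‖u_a - u_b‖_∞`. -/
theorem gru_one_step_incremental_contraction {nu nx : ℕ}
    (Wz Wf Wr : Matrix (Fin nx) (Fin nu) ℝ)
    (Uz Uf Ur : Matrix (Fin nx) (Fin nx) ℝ)
    (bz bf br : Fin nx → ℝ)
    (lam : ℝ) (hlam : 1 ≤ lam)
    (hcond : matNorm Ur * ((1 / 4) * lam * matNorm Uf + _root_.sigmoid (catNorm Wf (lam • Uf) bf)) <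
      1 - (1 / 4) * ((lam + Real.tanh (catNorm Wr (lam • Ur) br)) /
        (1 - _root_.sigmoid (catNorm Wz (lam • Uz) bz))) * matNorm Uz) :
    ∃ δ : ℝ, 0 < δ ∧ δ < 1 ∧
      ∀ ua ub : Fin nu → ℝ, ‖ua‖ ≤ 1 → ‖ub‖ ≤ 1 →
        ∀ xa xb : Fin nx → ℝ, ‖xa‖ ≤ lam → ‖xb‖ ≤ lam →
          ‖gruStep Wz Wf Wr Uz Uf Ur bz bf br ua xa -
              gruStep Wz Wf Wr Uz Uf Ur bz bf br ub xb‖ ≤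
            (1 - δ) * ‖xa - xb‖ +
              ((1 / 4) * (lam + Real.tanh (catNorm Wr (lam • Ur) br)) * matNorm Wz +
                _root_.sigmoid (catNorm Wz (lam • Uz) bz) *
                  (matNorm Wr + (1 / 4) * lam * matNorm Ur * matNorm Wf)) *
                ‖ua - ub‖ := by
  have hlam0 : (0:ℝ) ≤ lam := by linarith
  set Mz := catNorm Wz (lam • Uz) bz with hMz
  set Mf := catNorm Wf (lam • Uf) bf with hMf
  set Mr := catNorm Wr (lam • Ur) br with hMr
  set σz := _root_.sigmoid Mz with hσzdef
  set σf := _root_.sigmoid Mf with hσfdef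
  set φr := Real.tanh Mr with hφrdef
  have hσz0 : 0 < σz := _root_.sigmoid_pos _
  have hσz1 : σz < 1 := _root_.sigmoid_lt_one _
  have hσf0 : 0 < σf := _root_.sigmoid_pos _
  have hσf1 : σf < 1 := _root_.sigmoid_lt_one _
  have hφr0 : 0 ≤ φr := _root_.tanh_nonneg' (catNorm_nonneg _ _ _)
  have nUz := matNorm_nonneg Uz
  have nUf := matNorm_nonneg Uf
  have nUr := matNorm_nonneg Ur
  have nWz := matNorm_nonneg Wz
  have nWf := matNorm_nonneg Wf
  have nWr := matNorm_nonneg Wr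
  set K := matNorm Ur * ((1/4) * lam * matNorm Uf + σf) with hKdef
  have hlamφ : (0:ℝ) ≤ lam + φr := by linarith
  have hK0 : 0 ≤ K := mul_nonneg nUr (by nlinarith)
  have hq0 : 0 ≤ (1/4) * (lam + φr) * matNorm Uz :=
    mul_nonneg (mul_nonneg (by norm_num) hlamφ) nUz
  have hcond' : K * (1 - σz) < (1 - σz) - (1/4) * (lam + φr) * matNorm Uz := by
    have h := mul_lt_mul_of_pos_right hcond (by linarith : (0:ℝ) < 1 - σz)
    have e : (lam + φr) / (1 - σz) * (1 - σz) = lam + φr :=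
      div_mul_cancel₀ _ (by linarith)
    have e2 : (1 - (1/4) * ((lam + φr) / (1 - σz)) * matNorm Uz) * (1 - σz)
        = (1 - σz) - (1/4) * (lam + φr) * matNorm Uz := by
      linear_combination (-(1:ℝ)/4 * matNorm Uz) * e
    rw [e2] at h
    exact h
  have hcomm : K * (1 - σz) = (1 - σz) * K := mul_comm _ _
  have hK1 : K ≤ 1 := by nlinarith [mul_nonneg hK0 hσz0.le]
  set c1 := σz + (1 - σz) * K + (1/4) * (lam + φr) * matNorm Uz with hc1def
  have hKσ : 0 ≤ (1 - σz) * K := mul_nonneg (by linarith) hK0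
  have hc1lt : c1 < 1 := by rw [hc1def]; linarith
  have hc1pos : 0 < c1 := by rw [hc1def]; linarith
  refine ⟨1 - c1, by linarith, by linarith, ?_⟩
  intro ua ub hua hub xa xb hxa hxb
  have h1δ : 1 - (1 - c1) = c1 := by ring
  rw [h1δ]
  set Du := ‖ua - ub‖ with hDu
  set X := ‖xa - xb‖ with hX
  have hDu0 : 0 ≤ Du := norm_nonneg _
  have hX0 : 0 ≤ X := norm_nonneg _
  set α := (1/4) * (lam + φr) * matNorm Wz + σz * (matNorm Wr + (1/4) * lam * matNorm Ur * matNorm Wf) with hαdef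
  have hβ0 : 0 ≤ matNorm Wr + (1/4) * lam * matNorm Ur * matNorm Wf := by
    have : 0 ≤ (1/4) * lam * matNorm Ur * matNorm Wf :=
      mul_nonneg (mul_nonneg (mul_nonneg (by norm_num) hlam0) nUr) nWf
    linarith
  have hα0 : 0 ≤ α := by
    rw [hαdef]
    have h1 : 0 ≤ (1/4) * (lam + φr) * matNorm Wz :=
      mul_nonneg (mul_nonneg (by norm_num) hlamφ) nWz
    have h2 : 0 ≤ σz * (matNorm Wr + (1/4) * lam * matNorm Ur * matNorm Wf) :=
      mul_nonneg hσz0.le hβ0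
    linarith
  rw [pi_norm_le_iff_of_nonneg
    (add_nonneg (mul_nonneg hc1pos.le hX0) (mul_nonneg hα0 hDu0))]
  intro i
  -- abbreviations
  set fa : Fin nx → ℝ := fun j => _root_.sigmoid ((Wf.mulVec ua + Uf.mulVec xa + bf) j) with hfa
  set fb : Fin nx → ℝ := fun j => _root_.sigmoid ((Wf.mulVec ub + Uf.mulVec xb + bf) j) with hfb
  set za := _root_.sigmoid ((Wz.mulVec ua + Uz.mulVec xa + bz) i) with hza
  set zb := _root_.sigmoid ((Wz.mulVec ub + Uz.mulVec xb + bz) i) with hzb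
  set ra := Real.tanh ((Wr.mulVec ua + Ur.mulVec (fa * xa) + br) i) with hra
  set rb := Real.tanh ((Wr.mulVec ub + Ur.mulVec (fb * xb) + br) i) with hrb
  have hgoal_eq : (gruStep Wz Wf Wr Uz Uf Ur bz bf br ua xa -
      gruStep Wz Wf Wr Uz Uf Ur bz bf br ub xb) i
      = (za * xa i + (1 - za) * ra) - (zb * xb i + (1 - zb) * rb) := rfl
  rw [Real.norm_eq_abs, hgoal_eq]
  -- basic bounds
  have hza_ub : za ≤ σz := (_root_.sigmoid_bounds (arg_bound Wz Uz bz hlam0 hua hxa i)).2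
  have hza_lb : 1 - σz ≤ za := (_root_.sigmoid_bounds (arg_bound Wz Uz bz hlam0 hua hxa i)).1
  have hza_pos : 0 < za := _root_.sigmoid_pos _
  have hza_lt1 : za < 1 := _root_.sigmoid_lt_one _
  have hxbi : |xb i| ≤ lam := (norm_le_pi_norm xb i).trans hxb
  -- ‖fb * xb‖ ≤ lam, so |rb| ≤ φr
  have hfbxb : ‖fb * xb‖ ≤ lam := by
    rw [pi_norm_le_iff_of_nonneg hlam0]
    intro j
    have h1 : |fb j| ≤ 1 := by
      rw [abs_of_pos (_root_.sigmoid_pos _)]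
      exact (_root_.sigmoid_lt_one _).le
    have h2 : |xb j| ≤ lam := (norm_le_pi_norm xb j).trans hxb
    calc ‖(fb * xb) j‖ = |fb j| * |xb j| := by
          simp [Pi.mul_apply, Real.norm_eq_abs, abs_mul]
      _ ≤ 1 * lam := mul_le_mul h1 h2 (abs_nonneg _) zero_le_one
      _ = lam := one_mul lam
  have hrb_abs : |rb| ≤ φr := _root_.abs_tanh_le (arg_bound Wr Ur br hlam0 hub hfbxb i)
  -- z difference
  have hdz : |za - zb| ≤ (1/4) * (matNorm Wz * Du + matNorm Uz * X) := by
    refine (_root_.sigmoid_lipschitz _ _).trans ?_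
    have harg : (Wz.mulVec ua + Uz.mulVec xa + bz) i - (Wz.mulVec ub + Uz.mulVec xb + bz) i
        = Wz.mulVec (ua - ub) i + Uz.mulVec (xa - xb) i := by
      simp [Matrix.mulVec_sub, Pi.add_apply, Pi.sub_apply]
      ring
    rw [harg]
    have := (abs_add_le (Wz.mulVec (ua - ub) i) (Uz.mulVec (xa - xb) i)).trans
      (add_le_add (abs_mulVec_le Wz (ua - ub) i) (abs_mulVec_le Uz (xa - xb) i))
    linarith
  -- f*x difference
  have hG0 : 0 ≤ σf * X + lam * ((1/4) * (matNorm Wf * Du + matNorm Uf * X)) := by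
    have h1 : 0 ≤ σf * X := mul_nonneg hσf0.le hX0
    have h2 : 0 ≤ matNorm Wf * Du + matNorm Uf * X :=
      add_nonneg (mul_nonneg nWf hDu0) (mul_nonneg nUf hX0)
    have h3 : 0 ≤ lam * ((1/4) * (matNorm Wf * Du + matNorm Uf * X)) :=
      mul_nonneg hlam0 (mul_nonneg (by norm_num) h2)
    linarith
  have hw : ‖fa * xa - fb * xb‖ ≤ σf * X + lam * ((1/4) * (matNorm Wf * Du + matNorm Uf * X)) := by
    rw [pi_norm_le_iff_of_nonneg hG0]
    intro j
    have hfaj_ub : fa j ≤ σf := (_root_.sigmoid_bounds (arg_bound Wf Uf bf hlam0 hua hxa j)).2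
    have hfaj_pos : 0 < fa j := _root_.sigmoid_pos _
    have hdxj : |xa j - xb j| ≤ X := by
      have := norm_le_pi_norm (xa - xb) j
      simpa [Real.norm_eq_abs, Pi.sub_apply] using this
    have hxbj : |xb j| ≤ lam := (norm_le_pi_norm xb j).trans hxb
    have hdfj : |fa j - fb j| ≤ (1/4) * (matNorm Wf * Du + matNorm Uf * X) := by
      refine (_root_.sigmoid_lipschitz _ _).trans ?_
      have harg : (Wf.mulVec ua + Uf.mulVec xa + bf) j - (Wf.mulVec ub + Uf.mulVec xb + bf) j
          = Wf.mulVec (ua - ub) j + Uf.mulVec (xa - xb) j := by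
        simp [Matrix.mulVec_sub, Pi.add_apply, Pi.sub_apply]
        ring
      rw [harg]
      have := (abs_add_le (Wf.mulVec (ua - ub) j) (Uf.mulVec (xa - xb) j)).trans
        (add_le_add (abs_mulVec_le Wf (ua - ub) j) (abs_mulVec_le Uf (xa - xb) j))
      linarith
    have hid : (fa * xa - fb * xb) j = fa j * (xa j - xb j) + (fa j - fb j) * xb j := by
      simp [Pi.mul_apply, Pi.sub_apply]
      ring
    rw [Real.norm_eq_abs, hid]
    calc |fa j * (xa j - xb j) + (fa j - fb j) * xb j|
        ≤ |fa j| * |xa j - xb j| + |fa j - fb j| * |xb j| := by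
          refine (abs_add_le _ _).trans ?_
          rw [abs_mul, abs_mul]
      _ ≤ σf * X + ((1/4) * (matNorm Wf * Du + matNorm Uf * X)) * lam := by
          have h1 : |fa j| * |xa j - xb j| ≤ σf * X := by
            rw [abs_of_pos hfaj_pos]
            exact mul_le_mul hfaj_ub hdxj (abs_nonneg _) hσf0.le
          have h2 : |fa j - fb j| * |xb j| ≤ ((1/4) * (matNorm Wf * Du + matNorm Uf * X)) * lam :=
            mul_le_mul hdfj hxbj (abs_nonneg _)
              (mul_nonneg (by norm_num) (add_nonneg (mul_nonneg nWf hDu0) (mul_nonneg nUf hX0)))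
          linarith
      _ = σf * X + lam * ((1/4) * (matNorm Wf * Du + matNorm Uf * X)) := by ring
  -- r difference
  have hdr : |ra - rb| ≤ matNorm Wr * Du +
      matNorm Ur * (σf * X + lam * ((1/4) * (matNorm Wf * Du + matNorm Uf * X))) := by
    refine (_root_.tanh_lipschitz _ _).trans ?_
    have harg : (Wr.mulVec ua + Ur.mulVec (fa * xa) + br) i - (Wr.mulVec ub + Ur.mulVec (fb * xb) + br) i
        = Wr.mulVec (ua - ub) i + Ur.mulVec (fa * xa - fb * xb) i := by
      simp [Matrix.mulVec_sub, Pi.add_apply, Pi.sub_apply]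
      ring
    rw [harg]
    have h1 := (abs_add_le (Wr.mulVec (ua - ub) i) (Ur.mulVec (fa * xa - fb * xb) i)).trans
      (add_le_add (abs_mulVec_le Wr (ua - ub) i) (abs_mulVec_le Ur (fa * xa - fb * xb) i))
    have h2 : matNorm Ur * ‖fa * xa - fb * xb‖ ≤
        matNorm Ur * (σf * X + lam * ((1/4) * (matNorm Wf * Du + matNorm Uf * X))) :=
      mul_le_mul_of_nonneg_left hw nUr
    linarith
  -- x difference at i
  have hdxi : |xa i - xb i| ≤ X := by
    have := norm_le_pi_norm (xa - xb) i
    simpa [Real.norm_eq_abs, Pi.sub_apply] using this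
  -- combine
  have hsplit : (za * xa i + (1 - za) * ra) - (zb * xb i + (1 - zb) * rb)
      = za * (xa i - xb i) + (1 - za) * (ra - rb) + (za - zb) * (xb i - rb) := by ring
  have hxr : |xb i - rb| ≤ lam + φr := by
    have := abs_sub (xb i) rb
    calc |xb i - rb| ≤ |xb i| + |rb| := abs_sub _ _
      _ ≤ lam + φr := add_le_add hxbi hrb_abs
  have hmain : |(za * xa i + (1 - za) * ra) - (zb * xb i + (1 - zb) * rb)|
      ≤ za * X + (1 - za) * (matNorm Wr * Du +
          matNorm Ur * (σf * X + lam * ((1/4) * (matNorm Wf * Du + matNorm Uf * X)))) +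
        ((1/4) * (matNorm Wz * Du + matNorm Uz * X)) * (lam + φr) := by
    rw [hsplit]
    have t1 : |za * (xa i - xb i)| ≤ za * X := by
      rw [abs_mul, abs_of_pos hza_pos]
      exact mul_le_mul_of_nonneg_left hdxi hza_pos.le
    have t2 : |(1 - za) * (ra - rb)| ≤ (1 - za) * (matNorm Wr * Du +
        matNorm Ur * (σf * X + lam * ((1/4) * (matNorm Wf * Du + matNorm Uf * X)))) := by
      rw [abs_mul, abs_of_pos (by linarith : (0:ℝ) < 1 - za)]
      exact mul_le_mul_of_nonneg_left hdr (by linarith)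
    have t3 : |(za - zb) * (xb i - rb)| ≤ ((1/4) * (matNorm Wz * Du + matNorm Uz * X)) * (lam + φr) := by
      rw [abs_mul]
      refine mul_le_mul hdz hxr (abs_nonneg _)
        (mul_nonneg (by norm_num) (add_nonneg (mul_nonneg nWz hDu0) (mul_nonneg nUz hX0)))
    calc |za * (xa i - xb i) + (1 - za) * (ra - rb) + (za - zb) * (xb i - rb)|
        ≤ |za * (xa i - xb i) + (1 - za) * (ra - rb)| + |(za - zb) * (xb i - rb)| := abs_add_le _ _
      _ ≤ |za * (xa i - xb i)| + |(1 - za) * (ra - rb)| + |(za - zb) * (xb i - rb)| := by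
          linarith [abs_add_le (za * (xa i - xb i)) ((1 - za) * (ra - rb))]
      _ ≤ _ := by linarith
  refine hmain.trans ?_
  have h1 : 0 ≤ (σz - za) * (1 - K) * X :=
    mul_nonneg (mul_nonneg (by linarith) (by linarith)) hX0
  have h2 : 0 ≤ (σz - (1 - za)) * (matNorm Wr + (1/4) * lam * matNorm Ur * matNorm Wf) * Du :=
    mul_nonneg (mul_nonneg (by linarith) hβ0) hDu0
  have key : za * X + (1 - za) * (matNorm Wr * Du +
        matNorm Ur * (σf * X + lam * ((1/4) * (matNorm Wf * Du + matNorm Uf * X)))) +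
      ((1/4) * (matNorm Wz * Du + matNorm Uz * X)) * (lam + φr)
      = c1 * X + α * Du - ((σz - za) * (1 - K) * X +
        (σz - (1 - za)) * (matNorm Wr + (1/4) * lam * matNorm Ur * matNorm Wf) * Du) := by
    rw [hc1def, hαdef, hKdef]
    ring
  rw [key]
  linarith
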